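/- arXiv:quant-ph/0009038 — 2 statements merged into one kernel-verified Lean document; each statement's English description precedes it below -/
import Mathlib

section
/- An ortholattice L satisfies, for all a, b, c ∈ L, the identity (a ≡ b) ⊓ (b ≡ c) = (a ≡ b) ⊓ (a ≡ c) if and only if L is orthomodular. -/
/-- An ortholattice: a bounded lattice with an orthocomplementation. -/
class Ortholattice (α : Type*) extends Lattice α, BoundedOrder α, Compl α where
  compl_compl : ∀ x : α, xᶜᶜ = x
  compl_antitone : ∀ x y : α, x ≤ y → yᶜ ≤ xᶜ
  inf_compl : ∀ x : α, x ⊓ xᶜ = ⊥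
  sup_compl : ∀ x : α, x ⊔ xᶜ = ⊤

/-- The identity operation `a ≡ b = (a ⊓ b) ⊔ (aᶜ ⊓ bᶜ)`. -/
def olEquiv {α : Type*} [Ortholattice α] (a b : α) : α := (a ⊓ b) ⊔ (aᶜ ⊓ bᶜ)

namespace OLAux

variable {α : Type*} [Ortholattice α]

lemma cc (x : α) : xᶜᶜ = x := Ortholattice.compl_compl x

lemma anti {x y : α} (h : x ≤ y) : yᶜ ≤ xᶜ := Ortholattice.compl_antitone x y h

lemma le_of_compl_le {x y : α} (h : xᶜ ≤ yᶜ) : y ≤ x := by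
  have := anti h; rwa [cc, cc] at this

lemma compl_sup' (x y : α) : (x ⊔ y)ᶜ = xᶜ ⊓ yᶜ := by
  apply le_antisymm
  · exact le_inf (anti le_sup_left) (anti le_sup_right)
  · have h1 : x ≤ (xᶜ ⊓ yᶜ)ᶜ := le_of_compl_le (by rw [cc]; exact inf_le_left)
    have h2 : y ≤ (xᶜ ⊓ yᶜ)ᶜ := le_of_compl_le (by rw [cc]; exact inf_le_right)
    have := anti (sup_le h1 h2)
    rwa [cc] at this

lemma compl_inf' (x y : α) : (x ⊓ y)ᶜ = xᶜ ⊔ yᶜ := by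
  have := compl_sup' xᶜ yᶜ
  rw [cc, cc] at this
  rw [← this, cc]

lemma compl_bot' : (⊥ : α)ᶜ = ⊤ :=
  le_antisymm le_top (by rw [← Ortholattice.sup_compl (⊥ : α), bot_sup_eq])

lemma olEquiv_comm (a b : α) : olEquiv a b = olEquiv b a := by
  unfold olEquiv; rw [inf_comm, inf_comm aᶜ]

section Omod

variable (h : ∀ a b : α, a ≤ b → a ⊔ (aᶜ ⊓ b) = b)
include h

lemma domod {a b : α} (hab : a ≤ b) : b ⊓ (bᶜ ⊔ a) = a := by
  have h1 := h bᶜ aᶜ (anti hab)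
  rw [cc] at h1
  have h2 := congrArg (·ᶜ) h1
  simp only [compl_sup', compl_inf', cc] at h2
  exact h2

lemma sandwich {z u v : α} (hu : u ≤ z) (hv : v ≤ zᶜ) : z ⊓ (u ⊔ v) = u := by
  apply le_antisymm
  · calc z ⊓ (u ⊔ v) ≤ z ⊓ (u ⊔ zᶜ) := inf_le_inf_left z (sup_le_sup_left hv u)
    _ = z ⊓ (zᶜ ⊔ u) := by rw [sup_comm]
    _ = u := domod h hu
  · exact le_inf hu le_sup_left

/-- Commutation relation. -/
def Cm (x y : α) : Prop := x = (x ⊓ y) ⊔ (x ⊓ yᶜ)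

lemma cm_symm {x y : α} (hxy : Cm x y) : Cm y x := by
  unfold Cm at *
  have hc : (x ⊓ y)ᶜ ⊓ y ≤ xᶜ := by
    have e1 : (x ⊓ y)ᶜ ⊓ y ≤ (x ⊓ y)ᶜ := inf_le_left
    have e2 : (x ⊓ y)ᶜ ⊓ y ≤ (x ⊓ yᶜ)ᶜ := by
      have e3 : (x ⊓ yᶜ)ᶜ = xᶜ ⊔ y := by rw [compl_inf', cc]
      rw [e3]
      exact le_trans inf_le_right le_sup_right
    have : (x ⊓ y)ᶜ ⊓ y ≤ (x ⊓ y)ᶜ ⊓ (x ⊓ yᶜ)ᶜ := le_inf e1 e2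
    rwa [← compl_sup', ← hxy] at this
  have hy := h (x ⊓ y) y inf_le_right
  apply le_antisymm
  · conv_lhs => rw [← hy]
    apply sup_le
    · exact le_trans (le_inf inf_le_right inf_le_left) le_sup_left
    · exact le_trans (le_inf inf_le_right hc) le_sup_right
  · exact sup_le inf_le_left inf_le_left

omit h in
lemma cm_compl_right {x y : α} (hxy : Cm x y) : Cm x yᶜ := by
  unfold Cm at *
  rw [cc, sup_comm]
  exact hxy

omit h in
lemma cm_sup {x y z : α} (hx : Cm x z) (hy : Cm y z) : Cm (x ⊔ y) z := by
  unfold Cm at *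
  apply le_antisymm
  · calc x ⊔ y = ((x ⊓ z) ⊔ (x ⊓ zᶜ)) ⊔ ((y ⊓ z) ⊔ (y ⊓ zᶜ)) := by rw [← hx, ← hy]
    _ ≤ ((x ⊔ y) ⊓ z) ⊔ ((x ⊔ y) ⊓ zᶜ) := by
        apply sup_le <;> apply sup_le
        · exact le_trans (inf_le_inf_right z le_sup_left) le_sup_left
        · exact le_trans (inf_le_inf_right zᶜ le_sup_left) le_sup_right
        · exact le_trans (inf_le_inf_right z le_sup_right) le_sup_left
        · exact le_trans (inf_le_inf_right zᶜ le_sup_right) le_sup_right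
  · exact sup_le inf_le_left inf_le_left

lemma cm_compl_left {x y : α} (hxy : Cm x y) : Cm xᶜ y :=
  cm_symm h (cm_compl_right (cm_symm h hxy))

lemma cm_inf {x y z : α} (hx : Cm x z) (hy : Cm y z) : Cm (x ⊓ y) z := by
  have := cm_compl_left h (cm_sup (cm_compl_left h hx) (cm_compl_left h hy))
  rwa [compl_sup', cc, cc] at this

lemma olEquiv_trans (a b c : α) : olEquiv a b ⊓ olEquiv b c ≤ olEquiv a c := by
  set e := olEquiv a b with he
  set f := olEquiv b c with hf
  have heb : e ⊓ b = a ⊓ b := by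
    rw [he, olEquiv, inf_comm]
    exact sandwich h inf_le_right inf_le_right
  have heb' : e ⊓ bᶜ = aᶜ ⊓ bᶜ := by
    rw [he, olEquiv, inf_comm, sup_comm]
    exact sandwich h inf_le_right (by rw [cc]; exact inf_le_right)
  have hfb : f ⊓ b = b ⊓ c := by
    rw [hf, olEquiv, inf_comm]
    exact sandwich h inf_le_left inf_le_left
  have hfb' : f ⊓ bᶜ = bᶜ ⊓ cᶜ := by
    rw [hf, olEquiv, inf_comm, sup_comm]
    exact sandwich h inf_le_left (by rw [cc]; exact inf_le_left)
  have ce : Cm e b := by rw [Cm, heb, heb']; exact he ▸ rfl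
  have cf : Cm f b := by rw [Cm, hfb, hfb']; rw [hf, olEquiv]
  have cd : Cm (e ⊓ f) b := cm_inf h ce cf
  have d1 : e ⊓ f ⊓ b ≤ a ⊓ c := by
    have : e ⊓ f ⊓ b = e ⊓ (f ⊓ b) := by rw [inf_assoc]
    rw [this, hfb, ← inf_assoc, heb]
    exact le_inf (le_trans inf_le_left inf_le_left) inf_le_right
  have d2 : e ⊓ f ⊓ bᶜ ≤ aᶜ ⊓ cᶜ := by
    have : e ⊓ f ⊓ bᶜ = e ⊓ (f ⊓ bᶜ) := by rw [inf_assoc]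
    rw [this, hfb', ← inf_assoc, heb']
    exact le_inf (le_trans inf_le_left inf_le_left) inf_le_right
  calc e ⊓ f = (e ⊓ f ⊓ b) ⊔ (e ⊓ f ⊓ bᶜ) := cd
  _ ≤ (a ⊓ c) ⊔ (aᶜ ⊓ cᶜ) := sup_le_sup d1 d2
  _ = olEquiv a c := rfl

end Omod

end OLAux

open OLAux in
/-- An ortholattice satisfies `(a ≡ b) ⊓ (b ≡ c) = (a ≡ b) ⊓ (a ≡ c)` for all `a b c`
iff it is orthomodular. -/
theorem stmt_1 (α : Type*) [Ortholattice α] :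
    (∀ a b c : α, olEquiv a b ⊓ olEquiv b c = olEquiv a b ⊓ olEquiv a c) ↔
      (∀ a b : α, a ≤ b → a ⊔ (aᶜ ⊓ b) = b) := by
  constructor
  · intro H a b hab
    have e1 : olEquiv b a = a ⊔ bᶜ := by
      rw [olEquiv, inf_eq_right.mpr hab, inf_eq_left.mpr (anti hab)]
    have e2 : olEquiv a ⊥ = aᶜ := by
      rw [olEquiv, inf_bot_eq, compl_bot', inf_top_eq, bot_sup_eq]
    have e3 : olEquiv b ⊥ = bᶜ := by
      rw [olEquiv, inf_bot_eq, compl_bot', inf_top_eq, bot_sup_eq]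
    have h1 := H b a ⊥
    rw [e1, e2, e3] at h1
    have h2 : (a ⊔ bᶜ) ⊓ bᶜ = bᶜ := inf_eq_right.mpr le_sup_right
    rw [h2] at h1
    have h3 := congrArg (·ᶜ) h1
    simp only [compl_inf', compl_sup', cc] at h3
    rwa [sup_comm] at h3
  · intro h a b c
    apply le_antisymm
    · exact le_inf inf_le_left (olEquiv_trans h a b c)
    · refine le_inf inf_le_left ?_
      rw [olEquiv_comm a b]
      exact olEquiv_trans h b a c
end

section
/- Let L be an orthomodular ortholattice satisfying Godowski's equation 4-Go (for all a₁, a₂, a₃, a₄ ∈ L, (a₁ →₁ a₂) ⊓ (a₂ →₁ a₃) ⊓ (a₃ →₁ a₄) ⊓ (a₄ →₁ a₁) = (a₄ →₁ a₃) ⊓ (a₃ →₁ a₂) ⊓ (a₂ →₁ a₁) ⊓ (a₁ →₁ a₄)). Then for all a, b, c, d, e, f, g, h ∈ L with a ≤ bᶜ, b ≤ cᶜ, c ≤ dᶜ, d ≤ eᶜ, e ≤ fᶜ, f ≤ gᶜ, g ≤ hᶜ, h ≤ aᶜ, Mayet's equation holds: (a ⊔ b) ⊓ (c ⊔ d) ⊓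 (e ⊔ f) ⊓ (g ⊔ h) ⊓ ((a ⊔ h) →₁ (d ⊔ e)ᶜ) = ⊥. -/
/-- The Sasaki implication `a →₁ b = aᶜ ⊔ (a ⊓ b)`. -/
def olImp1 {α : Type*} [Ortholattice α] (a b : α) : α := aᶜ ⊔ (a ⊓ b)

/-- The Dishkant implication `a →₂ b = b ⊔ (aᶜ ⊓ bᶜ)`. -/
def olImp2 {α : Type*} [Ortholattice α] (a b : α) : α := b ⊔ (aᶜ ⊓ bᶜ)

section Aux
variable {α : Type*} [Ortholattice α]

private lemma occ (x : α) : xᶜᶜ = x := Ortholattice.compl_compl x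

private lemma oanti {x y : α} (hxy : x ≤ y) : yᶜ ≤ xᶜ :=
  Ortholattice.compl_antitone x y hxy

private lemma ole_compl {x y : α} (hx : x ≤ yᶜ) : y ≤ xᶜ := by
  have := oanti hx; rwa [occ] at this

private lemma odm (x y : α) : (x ⊔ y)ᶜ = xᶜ ⊓ yᶜ := by
  apply le_antisymm
  · exact le_inf (oanti le_sup_left) (oanti le_sup_right)
  · have h1 : x ≤ (xᶜ ⊓ yᶜ)ᶜ := ole_compl inf_le_left
    have h2 : y ≤ (xᶜ ⊓ yᶜ)ᶜ := ole_compl inf_le_right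
    have := oanti (sup_le h1 h2); rwa [occ] at this

private lemma odm' (x y : α) : (x ⊓ y)ᶜ = xᶜ ⊔ yᶜ := by
  have h : (xᶜ ⊔ yᶜ)ᶜ = x ⊓ y := by rw [odm, occ, occ]
  rw [← h, occ]

/-- In an OML, if `k ≤ hᶜ` then `hᶜ ⊓ (h ⊔ k) = k`. -/
private lemma chop (hOM : ∀ a b : α, a ≤ b → a ⊔ (aᶜ ⊓ b) = b)
    {h k : α} (hk : k ≤ hᶜ) : hᶜ ⊓ (h ⊔ k) = k := by
  have hks : k ≤ hᶜ ⊓ (h ⊔ k) := le_inf hk le_sup_right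
  have hom := hOM k (hᶜ ⊓ (h ⊔ k)) hks
  have hz : kᶜ ⊓ (hᶜ ⊓ (h ⊔ k)) = ⊥ := by
    rw [← inf_assoc, ← odm, sup_comm k h, inf_comm]
    exact Ortholattice.inf_compl _
  rw [hz, sup_bot_eq] at hom
  exact hom.symm

/-- Key OML lemma: if `a ⊥ b` and `h ⊥ a` then `(a ⊔ b) ⊓ (h ⊔ (hᶜ ⊓ bᶜ)) ≤ a ⊔ h`. -/
private lemma keylem (hOM : ∀ a b : α, a ≤ b → a ⊔ (aᶜ ⊓ b) = b)
    {a b h : α} (hab : a ≤ bᶜ) (hha : h ≤ aᶜ) :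
    (a ⊔ b) ⊓ (h ⊔ (hᶜ ⊓ bᶜ)) ≤ a ⊔ h := by
  set w : α := h ⊔ (hᶜ ⊓ bᶜ) with hwdef
  have hah : a ≤ hᶜ := ole_compl hha
  have huw : a ⊔ h ≤ w := sup_le (le_trans (le_inf hah hab) le_sup_right) le_sup_left
  set u : α := a ⊔ h with hudef
  set m : α := uᶜ ⊓ w with hmdef
  have hw : u ⊔ m = w := hOM u w huw
  have hmh : m ≤ hᶜ := le_trans inf_le_left (oanti le_sup_right)
  have hmb : m ≤ bᶜ := by
    have h1 : m ≤ hᶜ ⊓ w := le_inf hmh inf_le_right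
    rw [hwdef, chop hOM (inf_le_left : hᶜ ⊓ bᶜ ≤ hᶜ)] at h1
    exact le_trans h1 inf_le_right
  have hma : m ≤ aᶜ := le_trans inf_le_left (oanti le_sup_left)
  have habm : a ⊔ b ≤ mᶜ := ole_compl (by rw [odm]; exact le_inf hma hmb)
  have hum : u ≤ mᶜ := ole_compl inf_le_left
  have hzw : (a ⊔ b) ⊓ w ≤ mᶜ ⊓ (m ⊔ u) :=
    le_inf (le_trans inf_le_left habm) (by rw [sup_comm m u, hw]; exact inf_le_right)
  rwa [chop hOM hum] at hzw

end Aux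

/-- In an orthomodular ortholattice satisfying Godowski'\''s equation 4-Go, Mayet'\''s
Example 4 equation holds. -/
theorem stmt_13 (α : Type*) [Ortholattice α]
    (hOM : ∀ a b : α, a ≤ b → a ⊔ (aᶜ ⊓ b) = b)
    (h4go : ∀ a1 a2 a3 a4 : α,
      olImp1 a1 a2 ⊓ olImp1 a2 a3 ⊓ olImp1 a3 a4 ⊓ olImp1 a4 a1 =
        olImp1 a4 a3 ⊓ olImp1 a3 a2 ⊓ olImp1 a2 a1 ⊓ olImp1 a1 a4) :
    ∀ a b c d e f g h : α,
      a ≤ bᶜ → b ≤ cᶜ → c ≤ dᶜ → d ≤ eᶜ → e ≤ fᶜ → f ≤ gᶜ → g ≤ hᶜ → h ≤ aᶜ →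
        (a ⊔ b) ⊓ (c ⊔ d) ⊓ (e ⊔ f) ⊓ (g ⊔ h) ⊓ olImp1 (a ⊔ h) (d ⊔ e)ᶜ = ⊥ := by
  intro a b c d e f g h hab hbc hcd hde hef hfg hgh hha
  set Y : α := (a ⊔ b) ⊓ (c ⊔ d) ⊓ (e ⊔ f) ⊓ (g ⊔ h) with hYdef
  have hYab : Y ≤ a ⊔ b := le_trans inf_le_left (le_trans inf_le_left inf_le_left)
  have hYcd : Y ≤ c ⊔ d := le_trans inf_le_left (le_trans inf_le_left inf_le_right)
  have hYef : Y ≤ e ⊔ f := le_trans inf_le_left inf_le_right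
  have hYgh : Y ≤ g ⊔ h := inf_le_right
  -- Godowski 4-Go at (bᶜ, dᶜ, fᶜ, hᶜ)
  have hgo := h4go bᶜ dᶜ fᶜ hᶜ
  -- Y is below each factor of the RHS
  have hR1 : Y ≤ olImp1 hᶜ fᶜ := by
    show Y ≤ hᶜᶜ ⊔ (hᶜ ⊓ fᶜ)
    rw [occ]
    exact le_trans hYgh (sup_le (le_trans (le_inf hgh (ole_compl hfg)) le_sup_right) le_sup_left)
  have hR2 : Y ≤ olImp1 fᶜ dᶜ := by
    show Y ≤ fᶜᶜ ⊔ (fᶜ ⊓ dᶜ)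
    rw [occ]
    exact le_trans hYef (sup_le (le_trans (le_inf hef (ole_compl hde)) le_sup_right) le_sup_left)
  have hR3 : Y ≤ olImp1 dᶜ bᶜ := by
    show Y ≤ dᶜᶜ ⊔ (dᶜ ⊓ bᶜ)
    rw [occ]
    exact le_trans hYcd (sup_le (le_trans (le_inf hcd (ole_compl hbc)) le_sup_right) le_sup_left)
  have hR4 : Y ≤ olImp1 bᶜ hᶜ := by
    show Y ≤ bᶜᶜ ⊔ (bᶜ ⊓ hᶜ)
    rw [occ]
    exact le_trans hYab (sup_le (le_trans (le_inf hab (ole_compl hha)) le_sup_right) le_sup_left)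
  have hYL : Y ≤ olImp1 bᶜ dᶜ ⊓ olImp1 dᶜ fᶜ ⊓ olImp1 fᶜ hᶜ ⊓ olImp1 hᶜ bᶜ := by
    rw [hgo]
    exact le_inf (le_inf (le_inf hR1 hR2) hR3) hR4
  -- extract the two useful factors
  have hw1 : Y ≤ h ⊔ (hᶜ ⊓ bᶜ) := by
    have h1 : Y ≤ olImp1 hᶜ bᶜ := le_trans hYL inf_le_right
    rw [olImp1, occ] at h1; exact h1
  have hw2 : Y ≤ d ⊔ (dᶜ ⊓ fᶜ) := by
    have h1 : Y ≤ olImp1 dᶜ fᶜ :=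
      le_trans hYL (le_trans inf_le_left (le_trans inf_le_left inf_le_right))
    rw [olImp1, occ] at h1; exact h1
  -- the key OML lemma gives Y ≤ a ⊔ h and Y ≤ d ⊔ e
  have hYah : Y ≤ a ⊔ h := le_trans (le_inf hYab hw1) (keylem hOM hab hha)
  have hYde : Y ≤ d ⊔ e := by
    have h1 : Y ≤ e ⊔ d := le_trans (le_inf hYef hw2) (keylem hOM hef hde)
    rwa [sup_comm e d] at h1
  -- finish
  have himpl : olImp1 (a ⊔ h) (d ⊔ e)ᶜ ≤ ((a ⊔ h) ⊓ (d ⊔ e))ᶜ := by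
    rw [odm']
    exact sup_le_sup_left inf_le_right _
  apply le_antisymm _ bot_le
  calc Y ⊓ olImp1 (a ⊔ h) (d ⊔ e)ᶜ
      ≤ ((a ⊔ h) ⊓ (d ⊔ e)) ⊓ ((a ⊔ h) ⊓ (d ⊔ e))ᶜ :=
        inf_le_inf (le_inf hYah hYde) himpl
    _ = ⊥ := Ortholattice.inf_compl _
end
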